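/- Let X and Y be real random variables with finite positive variance, and suppose X is bi-atomic. If (X,Y) is quasi-independent, then X and Y are independent. In particular, (X,Y) ∈ IC_0 if and only if X and Y are independent. -/

import Mathlib

open MeasureTheory ProbabilityTheory

variable {Ω : Type*} [MeasurableSpace Ω]

noncomputable def cov (μ : Measure Ω) (X Y : Ω → ℝ) : ℝ :=
  ∫ ω, (X ω - ∫ a, X a ∂μ) * (Y ω - ∫ a, Y a ∂μ) ∂μ

noncomputable def corr (μ : Measure Ω) (X Y : Ω → ℝ) : ℝ :=
  cov μ X Y / Real.sqrt (variance X μ * variance Y μ)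

def Admissible (μ : Measure Ω) (X Y : Ω → ℝ) (g : ℝ → ℝ) : Prop :=
  Measurable g ∧ MemLp (g ∘ X) 2 μ ∧ MemLp (g ∘ Y) 2 μ ∧
    0 < variance (g ∘ X) μ ∧ 0 < variance (g ∘ Y) μ

def IC (μ : Measure Ω) (X Y : Ω → ℝ) (r : ℝ) : Prop :=
  corr μ X Y = r ∧ ∀ g : ℝ → ℝ, Admissible μ X Y g → corr μ (g ∘ X) (g ∘ Y) = r

/-- Quasi-independence: `H(x,y) + H(y,x) = F(x)G(y) + F(y)G(x)` for all `x, y`. -/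
def QuasiIndep (μ : Measure Ω) (X Y : Ω → ℝ) : Prop :=
  ∀ x y : ℝ,
    (μ {ω | X ω ≤ x ∧ Y ω ≤ y}).toReal + (μ {ω | X ω ≤ y ∧ Y ω ≤ x}).toReal =
      (μ {ω | X ω ≤ x}).toReal * (μ {ω | Y ω ≤ y}).toReal +
        (μ {ω | X ω ≤ y}).toReal * (μ {ω | Y ω ≤ x}).toReal

/-! ### Auxiliary algebraic lemmas -/

lemma quad_B_eq_zero {A B : ℝ} (h : ∀ t : ℝ, 0 ≤ A + 2*B*t) : B = 0 := by
  by_contra hB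
  have h2 := h (-((A+1)/(2*B)))
  have he : 2*B * (-((A+1)/(2*B))) = -(A+1) := by
    field_simp
  rw [he] at h2
  linarith

lemma quad_pos_of_large {A B C : ℝ} (hC : 0 ≤ C) (hAC : 0 < A ∨ 0 < C)
    (h : ∀ t : ℝ, 0 ≤ A + 2*B*t + C*t^2) :
    ∃ T : ℝ, 1 ≤ T ∧ ∀ t, T ≤ t → 0 < A + 2*B*t + C*t^2 := by
  have hA : 0 ≤ A := by have := h 0; nlinarith
  by_cases hCpos : 0 < C
  · refine ⟨max 1 ((2*|B|+1)/C), le_max_left _ _, fun t ht => ?_⟩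
    have ht1 : (1:ℝ) ≤ t := le_trans (le_max_left _ _) ht
    have ht2 : (2*|B|+1)/C ≤ t := le_trans (le_max_right _ _) ht
    have hCt : 2*|B|+1 ≤ C * t := by
      rw [div_le_iff₀ hCpos] at ht2; linarith [mul_comm C t]
    have hB1 : -|B| ≤ B := neg_abs_le B
    have hB2 : B ≤ |B| := le_abs_self B
    nlinarith
  · have hC0 : C = 0 := le_antisymm (not_lt.mp hCpos) hC
    have hApos : 0 < A := hAC.resolve_right (by rw [hC0]; exact lt_irrefl 0)
    have hB0 : B = 0 := by
      apply quad_B_eq_zero (A := A)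
      intro t
      have := h t
      rw [hC0] at this; linarith
    exact ⟨1, le_rfl, fun t ht => by rw [hC0, hB0]; simpa using hApos⟩

lemma vandermonde_s_eq_zero {a s c t1 t2 t3 : ℝ} (h12 : t1 ≠ t2) (h13 : t1 ≠ t3) (h23 : t2 ≠ t3)
    (e1 : a + s*t1 + c*t1^2 = 0) (e2 : a + s*t2 + c*t2^2 = 0)
    (e3 : a + s*t3 + c*t3^2 = 0) : s = 0 := by
  have h1 : (t1 - t2) * (s + c*(t1+t2)) = 0 := by linear_combination e1 - e2
  have h2 : (t1 - t3) * (s + c*(t1+t3)) = 0 := by linear_combination e1 - e3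
  have k1 := (mul_eq_zero.mp h1).resolve_left (sub_ne_zero.mpr h12)
  have k2 := (mul_eq_zero.mp h2).resolve_left (sub_ne_zero.mpr h13)
  have h3 : c * (t2 - t3) = 0 := by linear_combination k1 - k2
  have hc : c = 0 := (mul_eq_zero.mp h3).resolve_right (sub_ne_zero.mpr h23)
  rw [hc] at k1; linarith

/-! ### Indicator functions and covariance computations -/

noncomputable def indC (S : Set Ω) : Ω → ℝ := S.indicator (fun _ => (1:ℝ))

lemma indC_apply (S : Set Ω) (ω : Ω) [Decidable (ω ∈ S)] :
    indC S ω = if ω ∈ S then 1 else 0 := by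
  unfold indC; rw [Set.indicator_apply]

lemma measurable_indC {S : Set Ω} (hS : MeasurableSet S) : Measurable (indC S) :=
  measurable_const.indicator hS

lemma integrable_indC (μ : Measure Ω) [IsProbabilityMeasure μ] {S : Set Ω}
    (hS : MeasurableSet S) : Integrable (indC S) μ :=
  (integrable_const (1:ℝ)).indicator hS

lemma integral_indC (μ : Measure Ω) [IsProbabilityMeasure μ] {S : Set Ω}
    (hS : MeasurableSet S) : ∫ ω, indC S ω ∂μ = (μ S).toReal := by
  unfold indC
  rw [integral_indicator_const (1:ℝ) hS]; simp; rfl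

lemma cov_eq (μ : Measure Ω) [IsProbabilityMeasure μ] {f g : Ω → ℝ}
    (hf : Integrable f μ) (hg : Integrable g μ) (hfg : Integrable (fun ω => f ω * g ω) μ) :
    cov μ f g = (∫ ω, f ω * g ω ∂μ) - (∫ ω, f ω ∂μ) * (∫ ω, g ω ∂μ) := by
  unfold cov
  set c := ∫ a, f a ∂μ with hc
  set d := ∫ a, g a ∂μ with hd
  have hcong : (fun ω => (f ω - c) * (g ω - d))
      = fun ω => (f ω * g ω - c * g ω) - (d * f ω - c * d) := by
    funext ω; ring
  have i1 : Integrable (fun ω => f ω * g ω - c * g ω) μ := hfg.sub (hg.const_mul c)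
  have i2 : Integrable (fun ω => d * f ω - c * d) μ := (hf.const_mul d).sub (integrable_const _)
  have i3 : Integrable (fun ω => c * g ω) μ := hg.const_mul c
  have i4 : Integrable (fun ω => d * f ω) μ := hf.const_mul d
  rw [hcong, integral_sub i1 i2, integral_sub hfg i3, integral_sub i4 (integrable_const _),
    integral_const_mul, integral_const_mul, integral_const]
  simp only [probReal_univ, ENNReal.toReal_one, one_smul, smul_eq_mul]
  ring

noncomputable def covI (μ : Measure Ω) (S T : Set Ω) : ℝ :=
  (μ (S ∩ T)).toReal - (μ S).toReal * (μ T).toReal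

lemma indC_comb_mul (S1 S2 T1 T2 : Set Ω) (t : ℝ) :
    (fun ω => (indC S1 ω + t * indC S2 ω) * (indC T1 ω + t * indC T2 ω))
      = fun ω => indC (S1 ∩ T1) ω + t * (indC (S1 ∩ T2) ω + indC (S2 ∩ T1) ω)
          + t^2 * indC (S2 ∩ T2) ω := by
  classical
  funext ω
  by_cases h1 : ω ∈ S1 <;> by_cases h2 : ω ∈ S2 <;> by_cases h3 : ω ∈ T1 <;>
    by_cases h4 : ω ∈ T2 <;>
    simp [indC_apply, h1, h2, h3, h4, Set.mem_inter_iff] <;> ring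

lemma integrable_comb (μ : Measure Ω) [IsProbabilityMeasure μ] {S1 S2 : Set Ω}
    (h1 : MeasurableSet S1) (h2 : MeasurableSet S2) (t : ℝ) :
    Integrable (fun ω => indC S1 ω + t * indC S2 ω) μ :=
  (integrable_indC μ h1).add ((integrable_indC μ h2).const_mul t)

lemma integral_comb (μ : Measure Ω) [IsProbabilityMeasure μ] {S1 S2 : Set Ω}
    (h1 : MeasurableSet S1) (h2 : MeasurableSet S2) (t : ℝ) :
    ∫ ω, (indC S1 ω + t * indC S2 ω) ∂μ = (μ S1).toReal + t * (μ S2).toReal := by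
  have i2 : Integrable (fun ω => t * indC S2 ω) μ := (integrable_indC μ h2).const_mul t
  rw [integral_add (integrable_indC μ h1) i2, integral_const_mul, integral_indC μ h1,
    integral_indC μ h2]

lemma cov_comb (μ : Measure Ω) [IsProbabilityMeasure μ] {S1 S2 T1 T2 : Set Ω}
    (h1 : MeasurableSet S1) (h2 : MeasurableSet S2)
    (h3 : MeasurableSet T1) (h4 : MeasurableSet T2) (t : ℝ) :
    cov μ (fun ω => indC S1 ω + t * indC S2 ω) (fun ω => indC T1 ω + t * indC T2 ω)
      = covI μ S1 T1 + (covI μ S1 T2 + covI μ S2 T1) * t + (covI μ S2 T2) * t^2 := by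
  have iA : Integrable (fun ω => indC (S1 ∩ T2) ω + indC (S2 ∩ T1) ω) μ :=
    (integrable_indC μ (h1.inter h4)).add (integrable_indC μ (h2.inter h3))
  have iB : Integrable (fun ω => t * (indC (S1 ∩ T2) ω + indC (S2 ∩ T1) ω)) μ := iA.const_mul t
  have iC : Integrable (fun ω => indC (S1 ∩ T1) ω
      + t * (indC (S1 ∩ T2) ω + indC (S2 ∩ T1) ω)) μ :=
    (integrable_indC μ (h1.inter h3)).add iB
  have iD : Integrable (fun ω => t^2 * indC (S2 ∩ T2) ω) μ :=
    (integrable_indC μ (h2.inter h4)).const_mul _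
  have hint : Integrable (fun ω =>
      (indC S1 ω + t * indC S2 ω) * (indC T1 ω + t * indC T2 ω)) μ := by
    rw [indC_comb_mul]; exact iC.add iD
  rw [cov_eq μ (integrable_comb μ h1 h2 t) (integrable_comb μ h3 h4 t) hint,
    indC_comb_mul, integral_add iC iD, integral_add (integrable_indC μ (h1.inter h3)) iB,
    integral_const_mul, integral_const_mul, integral_add (integrable_indC μ (h1.inter h4))
      (integrable_indC μ (h2.inter h3)),
    integral_indC μ (h1.inter h3), integral_indC μ (h1.inter h4),
    integral_indC μ (h2.inter h3), integral_indC μ (h2.inter h4),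
    integral_comb μ h1 h2 t, integral_comb μ h3 h4 t]
  unfold covI
  ring

lemma memLp_comb (μ : Measure Ω) [IsProbabilityMeasure μ] {S1 S2 : Set Ω}
    (h1 : MeasurableSet S1) (h2 : MeasurableSet S2) (t : ℝ) :
    MemLp (fun ω => indC S1 ω + t * indC S2 ω) 2 μ := by
  classical
  refine MemLp.of_bound ((measurable_indC h1).add
    ((measurable_indC h2).const_mul t)).aestronglyMeasurable (1 + |t|) (ae_of_all μ fun ω => ?_)
  have e1 : |indC S1 ω| ≤ 1 := by rw [indC_apply]; split_ifs <;> norm_num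
  have e2 : |indC S2 ω| ≤ 1 := by rw [indC_apply]; split_ifs <;> norm_num
  calc ‖indC S1 ω + t * indC S2 ω‖ ≤ |indC S1 ω| + |t * indC S2 ω| := abs_add_le _ _
    _ ≤ 1 + |t| := by rw [abs_mul]; nlinarith [abs_nonneg t, abs_nonneg (indC S2 ω)]

lemma variance_comb (μ : Measure Ω) [IsProbabilityMeasure μ] {S1 S2 : Set Ω}
    (h1 : MeasurableSet S1) (h2 : MeasurableSet S2) (t : ℝ) :
    variance (fun ω => indC S1 ω + t * indC S2 ω) μ
      = covI μ S1 S1 + (covI μ S1 S2 + covI μ S2 S1) * t + (covI μ S2 S2) * t^2 := by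
  rw [← cov_comb μ h1 h2 h1 h2 t]
  have hm := memLp_comb μ h1 h2 t
  rw [variance_eq_sub hm]
  have hint : Integrable (fun ω =>
      (indC S1 ω + t * indC S2 ω) * (indC S1 ω + t * indC S2 ω)) μ := by
    have := hm.integrable_sq
    simpa [pow_two] using this
  rw [cov_eq μ (integrable_comb μ h1 h2 t) (integrable_comb μ h1 h2 t) hint]
  congr 1
  · apply integral_congr_ae; filter_upwards with ω; simp [pow_two]
  · rw [pow_two]

/-! ### Covariance facts -/

lemma covI_comm (μ : Measure Ω) (S T : Set Ω) : covI μ S T = covI μ T S := by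
  unfold covI; rw [Set.inter_comm, mul_comm]

lemma pr_nonneg (μ : Measure Ω) (S : Set Ω) : 0 ≤ (μ S).toReal := ENNReal.toReal_nonneg

lemma pr_le_one (μ : Measure Ω) [IsProbabilityMeasure μ] (S : Set Ω) : (μ S).toReal ≤ 1 := by
  have h := prob_le_one (μ := μ) (s := S)
  calc (μ S).toReal ≤ (1 : ENNReal).toReal := ENNReal.toReal_mono (by simp) h
    _ = 1 := by simp

lemma covI_self (μ : Measure Ω) (S : Set Ω) :
    covI μ S S = (μ S).toReal * (1 - (μ S).toReal) := by
  unfold covI; rw [Set.inter_self]; ring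

lemma covI_left_degenerate (μ : Measure Ω) [IsProbabilityMeasure μ] {S : Set Ω}
    (hSm : MeasurableSet S) (h : (μ S).toReal = 0 ∨ (μ S).toReal = 1) (T : Set Ω) :
    covI μ S T = 0 := by
  unfold covI
  rcases h with h | h
  · have h0 : μ S = 0 := ((ENNReal.toReal_eq_zero_iff _).mp h).resolve_right (measure_ne_top μ S)
    have h1 : μ (S ∩ T) = 0 :=
      measure_mono_null Set.inter_subset_left h0
    rw [h, h1]; simp
  · have h1 : μ S = 1 := (ENNReal.toReal_eq_one_iff _).mp h
    have hc : μ Sᶜ = 0 := by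
      rw [measure_compl hSm (measure_ne_top μ S), h1, measure_univ, tsub_self]
    have h2 : μ (S ∩ T) = μ T := by rw [Set.inter_comm]; exact measure_inter_conull hc
    rw [h, h2]; simp

lemma covI_right_degenerate (μ : Measure Ω) [IsProbabilityMeasure μ] {T : Set Ω}
    (hTm : MeasurableSet T) (h : (μ T).toReal = 0 ∨ (μ T).toReal = 1) (S : Set Ω) :
    covI μ S T = 0 := by
  rw [covI_comm]; exact covI_left_degenerate μ hTm h S

lemma pr_degenerate {p : ℝ} (h : ¬(0 < p ∧ p < 1)) (h0 : 0 ≤ p) (h1 : p ≤ 1) :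
    p = 0 ∨ p = 1 := by
  by_cases hp : 0 < p
  · right
    have hlt : ¬ p < 1 := fun hlt => h ⟨hp, hlt⟩
    exact le_antisymm h1 (not_lt.mp hlt)
  · left; linarith [not_lt.mp hp]

lemma covI_zero_of_deg (μ : Measure Ω) [IsProbabilityMeasure μ] {S T : Set Ω}
    (hSm : MeasurableSet S) (hTm : MeasurableSet T)
    (h : ¬(0 < (μ S).toReal ∧ (μ S).toReal < 1 ∧ 0 < (μ T).toReal ∧ (μ T).toReal < 1)) :
    covI μ S T = 0 := by
  by_cases hS : 0 < (μ S).toReal ∧ (μ S).toReal < 1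
  · have hT : ¬(0 < (μ T).toReal ∧ (μ T).toReal < 1) :=
      fun hT => h ⟨hS.1, hS.2, hT.1, hT.2⟩
    exact covI_right_degenerate μ hTm (pr_degenerate hT (pr_nonneg μ T) (pr_le_one μ T)) S
  · exact covI_left_degenerate μ hSm (pr_degenerate hS (pr_nonneg μ S) (pr_le_one μ S)) T

/-! ### IC₀ implies the cross covariance sum vanishes -/

lemma cross_sum_zero (μ : Measure Ω) [IsProbabilityMeasure μ] (X Y : Ω → ℝ)
    (hXm : Measurable X) (hYm : Measurable Y)
    (hIC : ∀ g : ℝ → ℝ, Admissible μ X Y g → corr μ (g ∘ X) (g ∘ Y) = 0) (x y : ℝ)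
    (hx0 : 0 < (μ {ω | X ω ≤ x}).toReal) (hx1 : (μ {ω | X ω ≤ x}).toReal < 1)
    (hy0 : 0 < (μ {ω | Y ω ≤ y}).toReal) (hy1 : (μ {ω | Y ω ≤ y}).toReal < 1) :
    covI μ {ω | X ω ≤ x} {ω | Y ω ≤ y} + covI μ {ω | X ω ≤ y} {ω | Y ω ≤ x} = 0 := by
  classical
  set S1 : Set Ω := {ω | X ω ≤ x} with hS1def
  set S2 : Set Ω := {ω | X ω ≤ y} with hS2def
  set T1 : Set Ω := {ω | Y ω ≤ x} with hT1def
  set T2 : Set Ω := {ω | Y ω ≤ y} with hT2def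
  have hS1 : MeasurableSet S1 := hXm measurableSet_Iic
  have hS2 : MeasurableSet S2 := hXm measurableSet_Iic
  have hT1 : MeasurableSet T1 := hYm measurableSet_Iic
  have hT2 : MeasurableSet T2 := hYm measurableSet_Iic
  set g : ℝ → ℝ → ℝ := fun t r => (if r ≤ x then (1:ℝ) else 0) + t * (if r ≤ y then 1 else 0)
    with hgdef
  have hgm : ∀ t, Measurable (g t) := fun t =>
    (Measurable.ite measurableSet_Iic measurable_const measurable_const).add
      ((Measurable.ite measurableSet_Iic measurable_const measurable_const).const_mul t)
  have hgX : ∀ t, g t ∘ X = fun ω => indC S1 ω + t * indC S2 ω := by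
    intro t; funext ω
    simp [hgdef, Function.comp, indC_apply, hS1def, hS2def, Set.mem_setOf_eq]
  have hgY : ∀ t, g t ∘ Y = fun ω => indC T1 ω + t * indC T2 ω := by
    intro t; funext ω
    simp [hgdef, Function.comp, indC_apply, hT1def, hT2def, Set.mem_setOf_eq]
  have hvX : ∀ t, variance (g t ∘ X) μ
      = covI μ S1 S1 + 2*(covI μ S1 S2)*t + covI μ S2 S2*t^2 := by
    intro t
    rw [hgX t, variance_comb μ hS1 hS2 t, covI_comm μ S2 S1]; ring
  have hvY : ∀ t, variance (g t ∘ Y) μ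
      = covI μ T1 T1 + 2*(covI μ T1 T2)*t + covI μ T2 T2*t^2 := by
    intro t
    rw [hgY t, variance_comb μ hT1 hT2 t, covI_comm μ T2 T1]; ring
  have hnX : ∀ t : ℝ, 0 ≤ covI μ S1 S1 + 2*(covI μ S1 S2)*t + covI μ S2 S2*t^2 := by
    intro t; rw [← hvX t]; exact variance_nonneg _ μ
  have hnY : ∀ t : ℝ, 0 ≤ covI μ T1 T1 + 2*(covI μ T1 T2)*t + covI μ T2 T2*t^2 := by
    intro t; rw [← hvY t]; exact variance_nonneg _ μ
  have hAX : 0 < covI μ S1 S1 := by rw [covI_self]; nlinarith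
  have hCX : 0 ≤ covI μ S2 S2 := by
    rw [covI_self]; nlinarith [pr_nonneg μ S2, pr_le_one μ S2]
  have hAY : 0 ≤ covI μ T1 T1 := by
    rw [covI_self]; nlinarith [pr_nonneg μ T1, pr_le_one μ T1]
  have hCY : 0 < covI μ T2 T2 := by rw [covI_self]; nlinarith
  obtain ⟨TX, -, hTX⟩ := quad_pos_of_large hCX (Or.inl hAX) hnX
  obtain ⟨TY, -, hTY⟩ := quad_pos_of_large hCY.le (Or.inr hCY) hnY
  set T : ℝ := max TX TY with hTdef
  have key : ∀ t, T ≤ t →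
      covI μ S1 T1 + (covI μ S1 T2 + covI μ S2 T1)*t + covI μ S2 T2 * t^2 = 0 := by
    intro t ht
    have hvXpos : 0 < variance (g t ∘ X) μ := by
      rw [hvX t]; exact hTX t (le_trans (le_max_left _ _) ht)
    have hvYpos : 0 < variance (g t ∘ Y) μ := by
      rw [hvY t]; exact hTY t (le_trans (le_max_right _ _) ht)
    have hadm : Admissible μ X Y (g t) :=
      ⟨hgm t, by rw [hgX t]; exact memLp_comb μ hS1 hS2 t,
        by rw [hgY t]; exact memLp_comb μ hT1 hT2 t, hvXpos, hvYpos⟩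
    have hcorr := hIC (g t) hadm
    have hsq : 0 < Real.sqrt (variance (g t ∘ X) μ * variance (g t ∘ Y) μ) :=
      Real.sqrt_pos.mpr (mul_pos hvXpos hvYpos)
    have hcov : cov μ (g t ∘ X) (g t ∘ Y) = 0 := by
      unfold corr at hcorr
      exact (div_eq_zero_iff.mp hcorr).resolve_right (ne_of_gt hsq)
    rw [hgX t, hgY t, cov_comb μ hS1 hS2 hT1 hT2 t] at hcov
    exact hcov
  have e1 := key (T+1) (by linarith)
  have e2 := key (T+2) (by linarith)
  have e3 := key (T+3) (by linarith)
  exact vandermonde_s_eq_zero (ne_of_lt (by linarith : T+1 < T+2))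
    (ne_of_lt (by linarith : T+1 < T+3)) (ne_of_lt (by linarith : T+2 < T+3)) e1 e2 e3

/-! ### IC₀ implies quasi-independence -/

lemma ic_to_qi (μ : Measure Ω) [IsProbabilityMeasure μ] (X Y : Ω → ℝ)
    (hXm : Measurable X) (hYm : Measurable Y)
    (hIC : ∀ g : ℝ → ℝ, Admissible μ X Y g → corr μ (g ∘ X) (g ∘ Y) = 0) :
    QuasiIndep μ X Y := by
  intro x y
  have hxy : {ω | X ω ≤ x ∧ Y ω ≤ y} = {ω | X ω ≤ x} ∩ {ω | Y ω ≤ y} := rfl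
  have hyx : {ω | X ω ≤ y ∧ Y ω ≤ x} = {ω | X ω ≤ y} ∩ {ω | Y ω ≤ x} := rfl
  have hs : covI μ {ω | X ω ≤ x} {ω | Y ω ≤ y} + covI μ {ω | X ω ≤ y} {ω | Y ω ≤ x} = 0 := by
    by_cases h1 : 0 < (μ {ω | X ω ≤ x}).toReal ∧ (μ {ω | X ω ≤ x}).toReal < 1
        ∧ 0 < (μ {ω | Y ω ≤ y}).toReal ∧ (μ {ω | Y ω ≤ y}).toReal < 1
    · exact cross_sum_zero μ X Y hXm hYm hIC x y h1.1 h1.2.1 h1.2.2.1 h1.2.2.2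
    by_cases h2 : 0 < (μ {ω | X ω ≤ y}).toReal ∧ (μ {ω | X ω ≤ y}).toReal < 1
        ∧ 0 < (μ {ω | Y ω ≤ x}).toReal ∧ (μ {ω | Y ω ≤ x}).toReal < 1
    · have := cross_sum_zero μ X Y hXm hYm hIC y x h2.1 h2.2.1 h2.2.2.1 h2.2.2.2
      linarith
    · have d1 : covI μ {ω | X ω ≤ x} {ω | Y ω ≤ y} = 0 :=
        covI_zero_of_deg μ (hXm measurableSet_Iic) (hYm measurableSet_Iic) h1
      have d2 : covI μ {ω | X ω ≤ y} {ω | Y ω ≤ x} = 0 :=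
        covI_zero_of_deg μ (hXm measurableSet_Iic) (hYm measurableSet_Iic) h2
      rw [d1, d2, add_zero]
  unfold covI at hs
  rw [hxy, hyx]
  linarith

/-! ### From the toReal product formula to an `ℝ≥0∞` one -/

lemma ennreal_eq_of_toReal (μ : Measure Ω) [IsProbabilityMeasure μ] {U S T : Set Ω}
    (h : (μ U).toReal = (μ S).toReal * (μ T).toReal) : μ U = μ S * μ T := by
  have h' : (μ U).toReal = (μ S * μ T).toReal := by rw [ENNReal.toReal_mul]; exact h
  exact (ENNReal.toReal_eq_toReal_iff' (measure_ne_top μ U)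
    (ENNReal.mul_ne_top (measure_ne_top μ S) (measure_ne_top μ T))).mp h'

/-! ### Quasi-independence plus bi-atomicity implies CDF factorization -/

lemma qi_fact (μ : Measure Ω) [IsProbabilityMeasure μ] (X Y : Ω → ℝ)
    (hXm : Measurable X) (hYm : Measurable Y)
    (a b : ℝ) (hab : a < b) (hsum : μ {ω | X ω = a} + μ {ω | X ω = b} = 1)
    (hQI : QuasiIndep μ X Y) (x y : ℝ) :
    μ ({ω | X ω ≤ x} ∩ {ω | Y ω ≤ y}) = μ {ω | X ω ≤ x} * μ {ω | Y ω ≤ y} := by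
  classical
  set A : Set Ω := {ω | X ω = a} with hAdef
  set B : Set Ω := {ω | X ω = b} with hBdef
  have hA : MeasurableSet A := hXm (measurableSet_singleton a)
  have hB : MeasurableSet B := hXm (measurableSet_singleton b)
  have hd : Disjoint A B := by
    rw [Set.disjoint_left]
    intro ω h1 h2
    exact absurd ((h1 : X ω = a).symm.trans (h2 : X ω = b)) (ne_of_lt hab)
  have hN : μ ((A ∪ B)ᶜ) = 0 := by
    have hu : μ (A ∪ B) = 1 := by rw [measure_union hd hB]; exact hsum
    rw [measure_compl (hA.union hB) (measure_ne_top _ _), hu, measure_univ, tsub_self]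
  have low : ∀ z : ℝ, z < a → μ {ω | X ω ≤ z} = 0 := by
    intro z hz
    apply measure_mono_null _ hN
    intro ω hω
    simp only [Set.mem_compl_iff, Set.mem_union, hAdef, hBdef, Set.mem_setOf_eq]
    have hωz : X ω ≤ z := hω
    rintro (h | h) <;> rw [h] at hωz <;> linarith
  have mid : ∀ z : ℝ, a ≤ z → z < b → {ω | X ω ≤ z} =ᵐ[μ] A := by
    intro z h1 h2
    rw [MeasureTheory.ae_eq_set]
    constructor
    · apply measure_mono_null _ hN
      rintro ω ⟨hω1, hω2⟩
      simp only [Set.mem_compl_iff, Set.mem_union, hAdef, hBdef, Set.mem_setOf_eq]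
      have hωz : X ω ≤ z := hω1
      rintro (h | h)
      · exact hω2 h
      · rw [h] at hωz; linarith
    · have : A \ {ω | X ω ≤ z} = ∅ := by
        ext ω
        simp only [Set.mem_diff, Set.mem_setOf_eq, Set.mem_empty_iff_false, iff_false, not_and,
          not_not, hAdef]
        intro h; rw [h]; exact h1
      rw [this, measure_empty]
  have high : ∀ z : ℝ, b ≤ z → {ω | X ω ≤ z} =ᵐ[μ] Set.univ := by
    intro z hz
    rw [MeasureTheory.ae_eq_set]
    constructor
    · rw [Set.diff_eq, Set.compl_univ, Set.inter_empty, measure_empty]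
    · apply measure_mono_null _ hN
      rintro ω ⟨-, hω2⟩
      simp only [Set.mem_compl_iff, Set.mem_union, hAdef, hBdef, Set.mem_setOf_eq]
      simp only [Set.mem_setOf_eq] at hω2
      rintro (h | h)
      · exact hω2 (by rw [h]; linarith)
      · exact hω2 (by rw [h]; linarith)
  rcases lt_or_ge x a with hxa | hax
  · rw [measure_mono_null Set.inter_subset_left (low x hxa), low x hxa, zero_mul]
  rcases lt_or_ge x b with hxb | hbx
  · -- a ≤ x < b
    have hSx := mid x hax hxb
    rcases lt_or_ge y a with hya | hay
    · -- y < a : use QI at (x, y)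
      have h := hQI x y
      have z1 : (μ {ω | X ω ≤ y ∧ Y ω ≤ x}).toReal = 0 := by
        rw [measure_mono_null (fun ω hω => hω.1 : {ω | X ω ≤ y ∧ Y ω ≤ x} ⊆ {ω | X ω ≤ y})
          (low y hya)]
        simp
      have z2 : (μ {ω | X ω ≤ y}).toReal = 0 := by rw [low y hya]; simp
      rw [z1, z2] at h
      simp only [zero_mul, add_zero] at h
      apply ennreal_eq_of_toReal
      have : {ω | X ω ≤ x ∧ Y ω ≤ y} = {ω | X ω ≤ x} ∩ {ω | Y ω ≤ y} := rfl
      rw [← this]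
      exact h
    rcases lt_or_ge y b with hyb | hby
    · -- a ≤ y < b : use QI at (y, y)
      have h := hQI y y
      have hSy := mid y hay hyb
      have hxy' : {ω | X ω ≤ x} =ᵐ[μ] {ω | X ω ≤ y} := hSx.trans hSy.symm
      have m1 : μ ({ω | X ω ≤ x} ∩ {ω | Y ω ≤ y}) = μ ({ω | X ω ≤ y} ∩ {ω | Y ω ≤ y}) :=
        measure_congr (MeasureTheory.ae_eq_set_inter hxy' Filter.EventuallyEq.rfl)
      have m2 : μ {ω | X ω ≤ x} = μ {ω | X ω ≤ y} := measure_congr hxy'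
      have hyy : {ω | X ω ≤ y ∧ Y ω ≤ y} = {ω | X ω ≤ y} ∩ {ω | Y ω ≤ y} := rfl
      rw [hyy] at h
      apply ennreal_eq_of_toReal
      rw [m1, m2]
      linarith
    · -- b ≤ y : use QI at (x, y)
      have h := hQI x y
      have hSy := high y hby
      have z1 : (μ {ω | X ω ≤ y ∧ Y ω ≤ x}).toReal = (μ {ω | Y ω ≤ x}).toReal := by
        have : μ ({ω | X ω ≤ y} ∩ {ω | Y ω ≤ x}) = μ (Set.univ ∩ {ω | Y ω ≤ x}) :=
          measure_congr (MeasureTheory.ae_eq_set_inter hSy Filter.EventuallyEq.rfl)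
        have h2 : {ω | X ω ≤ y ∧ Y ω ≤ x} = {ω | X ω ≤ y} ∩ {ω | Y ω ≤ x} := rfl
        rw [h2, this, Set.univ_inter]
      have z2 : (μ {ω | X ω ≤ y}).toReal = 1 := by
        rw [measure_congr hSy, measure_univ]; simp
      rw [z1, z2, one_mul] at h
      apply ennreal_eq_of_toReal
      have hxyset : {ω | X ω ≤ x ∧ Y ω ≤ y} = {ω | X ω ≤ x} ∩ {ω | Y ω ≤ y} := rfl
      rw [← hxyset]
      linarith
  · -- b ≤ x : no QI needed
    have hSx := high x hbx
    have m1 : μ ({ω | X ω ≤ x} ∩ {ω | Y ω ≤ y}) = μ (Set.univ ∩ {ω | Y ω ≤ y}) :=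
      measure_congr (MeasureTheory.ae_eq_set_inter hSx Filter.EventuallyEq.rfl)
    rw [m1, Set.univ_inter, measure_congr hSx, measure_univ, one_mul]

/-! ### CDF factorization implies independence -/

lemma fact_to_indep (μ : Measure Ω) [IsProbabilityMeasure μ] (X Y : Ω → ℝ)
    (hXm : Measurable X) (hYm : Measurable Y)
    (hfact : ∀ x y : ℝ,
      μ ({ω | X ω ≤ x} ∩ {ω | Y ω ≤ y}) = μ {ω | X ω ≤ x} * μ {ω | Y ω ≤ y}) :
    IndepFun X Y μ := by
  have hgen : ∀ (Z : Ω → ℝ), MeasurableSpace.comap Z inferInstance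
      = MeasurableSpace.generateFrom (Set.range fun t : ℝ => Z ⁻¹' Set.Iic t) := by
    intro Z
    conv_lhs => rw [show (inferInstance : MeasurableSpace ℝ) = borel ℝ from rfl,
      borel_eq_generateFrom_Iic ℝ]
    rw [MeasurableSpace.comap_generateFrom, ← Set.range_comp]
    rfl
  have hpi : ∀ (Z : Ω → ℝ), IsPiSystem (Set.range fun t : ℝ => Z ⁻¹' Set.Iic t) := by
    intro Z s hs t ht _
    obtain ⟨u, rfl⟩ := hs
    obtain ⟨v, rfl⟩ := ht
    exact ⟨min u v, by rw [← Set.preimage_inter, Set.Iic_inter_Iic]⟩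
  have hsets : IndepSets (Set.range fun t : ℝ => X ⁻¹' Set.Iic t)
      (Set.range fun t : ℝ => Y ⁻¹' Set.Iic t) μ := by
    intro s t hs ht
    obtain ⟨u, rfl⟩ := hs
    obtain ⟨v, rfl⟩ := ht
    simp only [IndepSets, Kernel.const_apply, ae_dirac_eq, Filter.eventually_pure]
    exact hfact u v
  exact (IndepFun_iff_Indep X Y μ).mpr
    (IndepSets.indep hXm.comap_le hYm.comap_le (hpi X) (hpi Y) (hgen X) (hgen Y) hsets)

/-! ### Independence implies vanishing covariance/correlation -/

lemma cov_eq_zero_of_indep (μ : Measure Ω) [IsProbabilityMeasure μ] {f g : Ω → ℝ}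
    (h : IndepFun f g μ) (hf : MemLp f 2 μ) (hg : MemLp g 2 μ) : cov μ f g = 0 := by
  unfold cov
  set c := ∫ a, f a ∂μ with hc
  set d := ∫ a, g a ∂μ with hd
  have hf' : IndepFun (fun ω => f ω - c) (fun ω => g ω - d) μ :=
    h.comp (measurable_id.sub measurable_const) (measurable_id.sub measurable_const)
  have hm1 : AEStronglyMeasurable (fun ω => f ω - c) μ :=
    hf.aestronglyMeasurable.sub aestronglyMeasurable_const
  have hm2 : AEStronglyMeasurable (fun ω => g ω - d) μ :=
    hg.aestronglyMeasurable.sub aestronglyMeasurable_const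
  have hmul := hf'.integral_mul_eq_mul_integral hm1 hm2
  have hif : ∫ ω, (f ω - c) ∂μ = 0 := by
    rw [integral_sub (hf.integrable one_le_two) (integrable_const c), integral_const]
    simp [hc]
  have hfun : (fun ω => (f ω - c) * (g ω - d))
      = (fun ω => f ω - c) * (fun ω => g ω - d) := rfl
  rw [hfun, hmul, hif, zero_mul]

lemma corr_zero_of_indep (μ : Measure Ω) [IsProbabilityMeasure μ] {f g : Ω → ℝ}
    (h : IndepFun f g μ) (hf : MemLp f 2 μ) (hg : MemLp g 2 μ) : corr μ f g = 0 := by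
  unfold corr
  rw [cov_eq_zero_of_indep μ h hf hg, zero_div]

/-- If `X` is bi-atomic and `(X,Y)` is quasi-independent, then `X` and `Y`
are independent; in particular `(X,Y) ∈ IC_0` iff `X` and `Y` are independent. -/
theorem quasiIndep_biatomic_indep
    (μ : Measure Ω) [IsProbabilityMeasure μ] (X Y : Ω → ℝ)
    (hXm : Measurable X) (hYm : Measurable Y)
    (hX2 : MemLp X 2 μ) (hY2 : MemLp Y 2 μ)
    (hvX : 0 < variance X μ) (hvY : 0 < variance Y μ)
    (a b : ℝ) (hab : a < b)
    (ha : 0 < μ {ω | X ω = a}) (hb : 0 < μ {ω | X ω = b})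
    (hsum : μ {ω | X ω = a} + μ {ω | X ω = b} = 1) :
    (QuasiIndep μ X Y → IndepFun X Y μ) ∧ (IC μ X Y 0 ↔ IndepFun X Y μ) := by
  have hP1 : QuasiIndep μ X Y → IndepFun X Y μ := fun hQI =>
    fact_to_indep μ X Y hXm hYm (qi_fact μ X Y hXm hYm a b hab hsum hQI)
  refine ⟨hP1, ?_, ?_⟩
  · intro hIC
    exact hP1 (ic_to_qi μ X Y hXm hYm hIC.2)
  · intro hInd
    exact ⟨corr_zero_of_indep μ hInd hX2 hY2,
      fun g hg => corr_zero_of_indep μ (hInd.comp hg.1 hg.1) hg.2.1 hg.2.2.1⟩
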